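/- Let U₁ and U₂ be closed linear subspaces of a real Hilbert space X, and define T̃ : X → X by T̃ := P_{U₂} ∘ P_{U₁} + P_{U₂^⊥} ∘ P_{U₁^⊥}. Let λ ∈ (0,2) be a constant, let w0 ∈ X, and define w_{k+1} := (1 − λ)·w_k + λ·T̃(w_k). Then (w_k) converges strongly (in norm) to P_{U₁ ∩ U₂}(w0) + P_{U₁^⊥ ∩ U₂^⊥}(w0), and moreover P_{U₁}(w_k) converges strongly to P_{U₁ ∩ U₂}(w0). -/

import Mathlib

open scoped RealInnerProductSpace
open Filter

/-- Key convergence lemma: for a relaxed iteration of a linear isometry `V`,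
iterates converge to any point `z` fixed by `V` with `w 0 - z` orthogonal to
the fixed space of `V`. -/
theorem dr_key
    {X : Type*} [NormedAddCommGroup X] [InnerProductSpace ℝ X] [CompleteSpace X]
    (V : X ≃ₗᵢ[ℝ] X) (μ : ℝ) (hμ0 : 0 < μ) (hμ1 : μ < 1)
    (w : ℕ → X) (hrec : ∀ k, w (k + 1) = (1 - μ) • w k + μ • V (w k))
    (z : X) (hz : V z = z) (hperp : ∀ x, V x = x → ⟪w 0 - z, x⟫ = 0) :
    Tendsto w atTop (nhds z) := by
  classical
  set c : ℝ := μ * (1 - μ) with hc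
  have hcpos : 0 < c := mul_pos hμ0 (by linarith)
  set Sf : X → X := fun x => (1 - μ) • x + μ • V x with hSf
  -- basic algebra of Sf
  have hS_sub : ∀ x y, Sf (x - y) = Sf x - Sf y := by
    intro x y
    simp only [hSf, map_sub, smul_sub]
    abel
  have hSV : ∀ x, Sf (V x) = V (Sf x) := by
    intro x
    simp only [hSf, map_add, map_smul]
  -- energy identity
  have hsq : ∀ (cc : ℝ) (y : X), ‖cc • y‖ ^ 2 = cc ^ 2 * ‖y‖ ^ 2 := by
    intro cc y
    rw [norm_smul, mul_pow, Real.norm_eq_abs, sq_abs]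
  have henergy : ∀ x, ‖Sf x‖ ^ 2 = ‖x‖ ^ 2 - c * ‖x - V x‖ ^ 2 := by
    intro x
    have h1 : ‖Sf x‖ ^ 2 = ‖(1 - μ) • x‖ ^ 2 + 2 * ⟪(1 - μ) • x, μ • V x⟫ + ‖μ • V x‖ ^ 2 :=
      norm_add_sq_real _ _
    have h2 : ‖x - V x‖ ^ 2 = ‖x‖ ^ 2 - 2 * ⟪x, V x⟫ + ‖V x‖ ^ 2 := norm_sub_sq_real _ _
    have h3 : ‖V x‖ = ‖x‖ := V.norm_map x
    have h4 : ⟪(1 - μ) • x, μ • V x⟫ = (1 - μ) * (μ * ⟪x, V x⟫) := by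
      rw [real_inner_smul_left, real_inner_smul_right]
    rw [hsq, hsq, h4, h3] at h1
    rw [h3] at h2
    rw [h1, hc]
    linear_combination μ * (1 - μ) * h2
  have hle : ∀ x, ‖Sf x‖ ≤ ‖x‖ := by
    intro x
    have h := henergy x
    have h2 : ‖Sf x‖ ^ 2 ≤ ‖x‖ ^ 2 := by nlinarith [sq_nonneg ‖x - V x‖]
    nlinarith [norm_nonneg (Sf x), norm_nonneg x]
  have hiter_sub : ∀ k x y, Sf^[k] (x - y) = Sf^[k] x - Sf^[k] y := by
    intro k
    induction k with
    | zero => intro x y; simp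
    | succ k ih =>
      intro x y
      simp only [Function.iterate_succ_apply, hS_sub, ih]
  have hiter_le : ∀ k x, ‖Sf^[k] x‖ ≤ ‖x‖ := by
    intro k
    induction k with
    | zero => intro x; simp
    | succ k ih =>
      intro x
      rw [Function.iterate_succ_apply']
      exact (hle _).trans (ih x)
  -- asymptotic regularity from any start
  have har : ∀ y : X, Tendsto (fun k => Sf^[k] y - V (Sf^[k] y)) atTop (nhds 0) := by
    intro y
    set d : ℕ → ℝ := fun k => ‖Sf^[k] y - V (Sf^[k] y)‖ ^ 2 with hd
    have hdnn : ∀ k, 0 ≤ d k := fun k => sq_nonneg _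
    have hdrop : ∀ k, ‖Sf^[k + 1] y‖ ^ 2 = ‖Sf^[k] y‖ ^ 2 - c * d k := by
      intro k
      rw [Function.iterate_succ_apply']
      exact henergy _
    have hsum : ∀ n, ∑ k ∈ Finset.range n, c * d k = ‖y‖ ^ 2 - ‖Sf^[n] y‖ ^ 2 := by
      intro n
      induction n with
      | zero => simp
      | succ n ih => rw [Finset.sum_range_succ, ih, hdrop n]; ring
    have hbd : ∀ n, ∑ k ∈ Finset.range n, d k ≤ ‖y‖ ^ 2 / c := by
      intro n
      rw [le_div_iff₀ hcpos]
      have := hsum n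
      have h0 : (∑ k ∈ Finset.range n, d k) * c = ∑ k ∈ Finset.range n, c * d k := by
        rw [Finset.sum_mul]; congr 1; ext k; ring
      nlinarith [sq_nonneg ‖Sf^[n] y‖]
    have hsummable : Summable d := summable_of_sum_range_le hdnn hbd
    have hd0 : Tendsto d atTop (nhds 0) := hsummable.tendsto_atTop_zero
    rw [tendsto_zero_iff_norm_tendsto_zero]
    have : (fun k => ‖Sf^[k] y - V (Sf^[k] y)‖) = fun k => Real.sqrt (d k) := by
      ext k; rw [hd]; exact (Real.sqrt_sq (norm_nonneg _)).symm
    rw [this]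
    have := (Real.continuous_sqrt.tendsto 0).comp hd0
    simpa [Function.comp_def] using this
  -- the fixed submodule as an orthogonal complement
  set A : X →ₗ[ℝ] X := LinearMap.id - (V.toLinearEquiv : X →ₗ[ℝ] X) with hA
  set W : Submodule ℝ X := LinearMap.range A with hW
  have hAapp : ∀ y, A y = y - V y := fun y => rfl
  have hWperp : ∀ x, x ∈ Wᗮ ↔ V x = x := by
    intro x
    rw [Submodule.mem_orthogonal]
    constructor
    · intro hx
      have h1 : ∀ y : X, ⟪y - V y, x⟫ = 0 := by
        intro y
        have := hx (A y) (LinearMap.mem_range_self A y)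
        rwa [hAapp] at this
      have h2 : ∀ y : X, ⟪y, x - V.symm x⟫ = 0 := by
        intro y
        have hy := h1 y
        rw [inner_sub_left, sub_eq_zero] at hy
        have : ⟪V y, x⟫ = ⟪y, V.symm x⟫ := by
          conv_lhs => rw [← V.apply_symm_apply x]
          exact V.inner_map_map y (V.symm x)
        rw [inner_sub_right, ← this, ← hy, sub_self]
      have h3 : x - V.symm x = 0 := by
        have := h2 (x - V.symm x)
        rwa [inner_self_eq_zero] at this
      have h4 : V.symm x = x := by
        rw [sub_eq_zero] at h3; exact h3.symm
      conv_lhs => rw [← h4]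
      exact V.apply_symm_apply x
    · intro hx u hu
      obtain ⟨y, hy⟩ := hu
      rw [← hy, hAapp, inner_sub_left]
      have : ⟪V y, x⟫ = ⟪y, x⟫ := by
        conv_lhs => rw [← hx]
        exact V.inner_map_map y x
      rw [this, sub_self]
  -- zero limits on the range of I - V
  have hkey : ∀ (k : ℕ) (y : X), Sf^[k] (y - V y) = Sf^[k] y - V (Sf^[k] y) := by
    intro k
    induction k with
    | zero => intro y; simp
    | succ k ih =>
      intro y
      simp only [Function.iterate_succ_apply]
      have h1 : Sf (y - V y) = Sf y - V (Sf y) := by rw [hS_sub, hSV]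
      rw [h1, ih (Sf y)]
  have hrange0 : ∀ y : X, Tendsto (fun k => Sf^[k] (y - V y)) atTop (nhds 0) := by
    intro y
    simp only [hkey]
    exact har y
  -- zero limits on the closure
  have hD : ∀ m : X, m ∈ closure (W : Set X) → Tendsto (fun k => Sf^[k] m) atTop (nhds 0) := by
    intro m hm
    rw [Metric.tendsto_atTop]
    intro ε hε
    obtain ⟨m', hm'W, hdist⟩ := Metric.mem_closure_iff.mp hm (ε / 2) (by linarith)
    obtain ⟨y, hy⟩ := hm'W
    have h1 : Tendsto (fun k => Sf^[k] m') atTop (nhds 0) := by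
      have := hrange0 y
      rw [← hAapp, hy] at this
      exact this
    obtain ⟨N, hN⟩ := Metric.tendsto_atTop.mp h1 (ε / 2) (by linarith)
    refine ⟨N, fun k hk => ?_⟩
    have h2 : Sf^[k] m = Sf^[k] m' + Sf^[k] (m - m') := by
      rw [hiter_sub]; abel
    rw [dist_eq_norm, sub_zero]
    have h3 : ‖Sf^[k] m'‖ < ε / 2 := by
      have := hN k hk; rwa [dist_eq_norm, sub_zero] at this
    have h4 : ‖Sf^[k] (m - m')‖ < ε / 2 := by
      refine (hiter_le k _).trans_lt ?_
      have : dist m m' = ‖m - m'‖ := dist_eq_norm m m'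
      rw [← this]
      exact hdist
    calc ‖Sf^[k] m‖ ≤ ‖Sf^[k] m'‖ + ‖Sf^[k] (m - m')‖ := by rw [h2]; exact norm_add_le _ _
      _ < ε / 2 + ε / 2 := add_lt_add h3 h4
      _ = ε := by ring
  -- the iterates
  have hSz : Sf z = z := by
    show (1 - μ) • z + μ • V z = z
    rw [hz, ← add_smul]
    norm_num
  have hu : ∀ k, w k - z = Sf^[k] (w 0 - z) := by
    intro k
    induction k with
    | zero => simp
    | succ k ih =>
      rw [Function.iterate_succ_apply', ← ih]
      have h1 : Sf (w k - z) = Sf (w k) - z := by rw [hS_sub, hSz]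
      rw [h1, hrec k]
  have hu0mem : w 0 - z ∈ closure (W : Set X) := by
    rw [← Submodule.topologicalClosure_coe, ← Submodule.orthogonal_orthogonal_eq_closure]
    rw [SetLike.mem_coe, Submodule.mem_orthogonal]
    intro u hu
    rw [real_inner_comm]
    exact hperp u ((hWperp u).mp hu)
  have hlim : Tendsto (fun k => w k - z) atTop (nhds 0) :=
    (hD _ hu0mem).congr fun k => (hu k).symm
  have := hlim.add (tendsto_const_nhds (x := z))
  simpa using this

open Submodule

/-- Strong convergence of the relaxed Douglas–Rachford iteration for two closed subspaces:
with `T̃ = P_{U₂} P_{U₁} + P_{U₂ᗮ} P_{U₁ᗮ}` and `λ ∈ (0,2)`, the iterates converge in norm to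
`P_{U₁ ⊓ U₂} w0 + P_{U₁ᗮ ⊓ U₂ᗮ} w0`, and the shadows `P_{U₁} w_k` converge in norm to
`P_{U₁ ⊓ U₂} w0`. -/
theorem stmt_13
    {X : Type*} [NormedAddCommGroup X] [InnerProductSpace ℝ X] [CompleteSpace X]
    (U₁ U₂ : Submodule ℝ X) [Submodule.HasOrthogonalProjection U₁] [Submodule.HasOrthogonalProjection U₂]
    [Submodule.HasOrthogonalProjection (U₁ ⊓ U₂)] [Submodule.HasOrthogonalProjection (U₁ᗮ ⊓ U₂ᗮ)]
    (lam : ℝ) (hlam : lam ∈ Set.Ioo (0 : ℝ) 2)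
    (w0 : X) (w : ℕ → X) (hw0 : w 0 = w0)
    (hrec : ∀ k, w (k + 1) = (1 - lam) • w k +
      lam • ((Submodule.orthogonalProjectionOnto U₂ (Submodule.orthogonalProjectionOnto U₁ (w k) : X) : X) +
        (Submodule.orthogonalProjectionOnto U₂ᗮ (Submodule.orthogonalProjectionOnto U₁ᗮ (w k) : X) : X))) :
    Filter.Tendsto w Filter.atTop
        (nhds ((Submodule.orthogonalProjectionOnto (U₁ ⊓ U₂) w0 : X) +
          (Submodule.orthogonalProjectionOnto (U₁ᗮ ⊓ U₂ᗮ) w0 : X))) ∧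
      Filter.Tendsto (fun k => (Submodule.orthogonalProjectionOnto U₁ (w k) : X)) Filter.atTop
        (nhds (Submodule.orthogonalProjectionOnto (U₁ ⊓ U₂) w0 : X)) := by
  obtain ⟨hl0, hl2⟩ := hlam
  set V : X ≃ₗᵢ[ℝ] X := (reflection U₁).trans (reflection U₂) with hV
  have hVapp : ∀ x, V x = reflection U₂ (reflection U₁ x) := fun x => rfl
  set p : X := (orthogonalProjection (U₁ ⊓ U₂) w0 : X) with hp
  set q : X := (orthogonalProjection (U₁ᗮ ⊓ U₂ᗮ) w0 : X) with hq
  have hpmem : p ∈ U₁ ⊓ U₂ := (orthogonalProjection (U₁ ⊓ U₂) w0).2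
  have hqmem : q ∈ U₁ᗮ ⊓ U₂ᗮ := (orthogonalProjection (U₁ᗮ ⊓ U₂ᗮ) w0).2
  have hp1 : p ∈ U₁ := hpmem.1
  have hp2 : p ∈ U₂ := hpmem.2
  have hq1 : q ∈ U₁ᗮ := hqmem.1
  have hq2 : q ∈ U₂ᗮ := hqmem.2
  -- recursion in terms of V
  have hrec' : ∀ k, w (k + 1) = (1 - lam / 2) • w k + (lam / 2) • V (w k) := by
    intro k
    rw [hrec k]
    set x := w k
    have e1 : (orthogonalProjection U₁ᗮ x : X) = x - (orthogonalProjection U₁ x : X) :=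
      starProjection_orthogonal_val _
    have e4 : V x
        = 2 • (orthogonalProjection U₂ ((2 • (orthogonalProjection U₁ x : X) - x)) : X)
          - (2 • (orthogonalProjection U₁ x : X) - x) := by
      rw [hVapp, reflection_apply, reflection_apply]
      rfl
    rw [e1, e4]
    have e2 : (orthogonalProjection U₂ᗮ (x - (orthogonalProjection U₁ x : X)) : X)
        = (x - (orthogonalProjection U₁ x : X))
          - (orthogonalProjection U₂ (x - (orthogonalProjection U₁ x : X)) : X) :=
      starProjection_orthogonal_val _
    rw [e2]
    simp only [two_nsmul, two_smul, map_sub, map_add, Submodule.coe_add, Submodule.coe_sub]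
    module
  -- p + q is fixed by V
  have hVp : V p = p := by
    rw [hVapp, reflection_mem_subspace_eq_self hp1, reflection_mem_subspace_eq_self hp2]
  have hVq : V q = q := by
    rw [hVapp, reflection_mem_subspace_orthogonalComplement_eq_neg hq1, map_neg,
      reflection_mem_subspace_orthogonalComplement_eq_neg hq2, neg_neg]
  have hVz : V (p + q) = p + q := by rw [map_add, hVp, hVq]
  -- orthogonality of w0 - (p + q) to the fixed space of V
  have hperp : ∀ x, V x = x → ⟪w 0 - (p + q), x⟫ = 0 := by
    intro x hx
    rw [hVapp] at hx
    have hR : reflection U₁ x = reflection U₂ x := by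
      have h := congrArg (reflection U₂) hx
      rwa [reflection_reflection] at h
    have hPx : (orthogonalProjection U₁ x : X) = (orthogonalProjection U₂ x : X) := by
      rw [reflection_apply, reflection_apply] at hR
      have h3 : 2 • (orthogonalProjection U₁ x : X) = 2 • (orthogonalProjection U₂ x : X) :=
        sub_left_inj.mp hR
      rw [two_nsmul, two_nsmul] at h3
      have h5 : (2 : ℝ) • ((orthogonalProjection U₁ x : X) - (orthogonalProjection U₂ x : X))
          = 0 := by
        have habel : ((orthogonalProjection U₁ x : X) - (orthogonalProjection U₂ x : X))
            + ((orthogonalProjection U₁ x : X) - (orthogonalProjection U₂ x : X))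
            = ((orthogonalProjection U₁ x : X) + (orthogonalProjection U₁ x : X))
              - ((orthogonalProjection U₂ x : X) + (orthogonalProjection U₂ x : X)) := by
          abel
        rw [two_smul, habel, h3, sub_self]
      have h6 := (smul_eq_zero.mp h5).resolve_left (by norm_num)
      rw [sub_eq_zero] at h6
      exact h6
    set px : X := (orthogonalProjection U₁ x : X) with hpx
    have hpx1 : px ∈ U₁ := (orthogonalProjection U₁ x).2
    have hpx2 : px ∈ U₂ := by rw [hPx]; exact (orthogonalProjection U₂ x).2
    have hxpx1 : x - px ∈ U₁ᗮ := sub_starProjection_mem_orthogonal x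
    have hxpx2 : x - px ∈ U₂ᗮ := by
      rw [hPx]; exact sub_starProjection_mem_orthogonal x
    have hw0p : w0 - p ∈ (U₁ ⊓ U₂)ᗮ := sub_starProjection_mem_orthogonal w0
    have hw0q : w0 - q ∈ (U₁ᗮ ⊓ U₂ᗮ)ᗮ := sub_starProjection_mem_orthogonal w0
    have i1 : ⟪w0 - p, px⟫ = 0 :=
      (Submodule.mem_orthogonal' _ _).mp hw0p px ⟨hpx1, hpx2⟩
    have i2 : ⟪q, px⟫ = 0 := (Submodule.mem_orthogonal' _ _).mp hq1 px hpx1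
    have i3 : ⟪w0 - q, x - px⟫ = 0 :=
      (Submodule.mem_orthogonal' _ _).mp hw0q (x - px) ⟨hxpx1, hxpx2⟩
    have i4 : ⟪p, x - px⟫ = 0 := (Submodule.mem_orthogonal _ _).mp hxpx1 p hp1
    have hxd : x = px + (x - px) := by abel
    rw [hw0]
    conv_lhs => rw [hxd]
    simp only [inner_sub_left, inner_add_left, inner_sub_right, inner_add_right]
      at i1 i2 i3 i4 ⊢
    linarith [i1, i2, i3, i4]
  -- main convergence
  have hmain : Filter.Tendsto w Filter.atTop (nhds (p + q)) := by
    refine dr_key V (lam / 2) (by linarith) (by linarith) w hrec' (p + q) hVz ?_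
    intro x hx
    exact hperp x hx
  refine ⟨hmain, ?_⟩
  -- the shadow sequence
  have hcont : Continuous (fun y : X => (orthogonalProjection U₁ y : X)) :=
    continuous_subtype_val.comp (orthogonalProjection U₁).continuous
  have h2 := (hcont.tendsto (p + q)).comp hmain
  have hP1pq : (orthogonalProjection U₁ (p + q) : X) = p := by
    rw [map_add, Submodule.coe_add, coe_orthogonalProjectionOnto_apply U₁ p, starProjection_eq_self_iff.mpr hp1,
      orthogonalProjectionOnto_apply_of_mem_orthogonal hq1]
    simp
  rw [← hP1pq]
  exact h2
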